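/- Let f: P → Q be a C-functor and U ⊆ P a closed subset. Then dim U = dim f(U). Consequently, f is injective as a function on closed subsets of P. -/

import Mathlib

/-- An oriented graded poset: a finite graded poset together with an
orientation (edge-labelling of the Hasse diagram in `Bool`, `true` = `+`,
`false` = `-`).  `orient y x` is the label of the edge `y → x` when `x ⋖ y`. -/
structure OGP where
  carrier : Type
  [po : PartialOrder carrier]
  [fin : Finite carrier]
  dim : carrier → ℕ
  graded : ∀ x y : carrier, x ⋖ y → dim y = dim x + 1
  min_dim : ∀ x : carrier, IsMin x → dim x = 0
  orient : carrier → carrier → Bool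

attribute [instance] OGP.po OGP.fin

namespace OGP

variable (P : OGP)

/-- Downward closure of a subset. -/
def cl (U : Set P.carrier) : Set P.carrier := {x | ∃ y ∈ U, x ≤ y}

/-- A subset is closed if it is downward closed. -/
def IsClosed (U : Set P.carrier) : Prop := P.cl U ⊆ U

/-- `Δₙ^α U`: the `n`-dimensional elements of `U` all of whose covering
elements in `U` cover with sign `α`. -/
def sb (n : ℕ) (α : Bool) (U : Set P.carrier) : Set P.carrier :=
  {x | x ∈ U ∧ P.dim x = n ∧ ∀ y ∈ U, x ⋖ y → P.orient y x = α}

/-- The boundary `∂ₙ^α U`. -/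
def bd (n : ℕ) (α : Bool) (U : Set P.carrier) : Set P.carrier :=
  P.cl (P.sb n α U) ∪ {x | x ∈ U ∧ ∀ y ∈ U, x ≤ y → P.dim y ≤ n}

/-- Dimension of a subset (the maximum of the dimensions of its elements;
`0` if empty). -/
noncomputable def sdim (U : Set P.carrier) : ℕ := sSup (P.dim '' U)

end OGP

/-- A map of oriented graded posets: a function commuting with all boundary
operators `∂ₙ^α` on closures of points. -/
def IsMap (P Q : OGP) (f : P.carrier → Q.carrier) : Prop :=
  ∀ (x : P.carrier) (n : ℕ) (α : Bool),
    Q.bd n α (Q.cl {f x}) = f '' (P.bd n α (P.cl {x}))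

/-- Molecules in an oriented graded poset, defined inductively: atoms
(closed subsets with a greatest element), and pastings `U₁ ∪ U₂` of two
molecules properly contained in the union with
`U₁ ∩ U₂ = ∂ₖ^+ U₁ = ∂ₖ^- U₂`. -/
inductive IsMolecule (P : OGP) : Set P.carrier → Prop
  | atom : ∀ U : Set P.carrier, P.IsClosed U → (∃ x ∈ U, ∀ y ∈ U, y ≤ x) →
      IsMolecule P U
  | paste : ∀ (U₁ U₂ : Set P.carrier) (k : ℕ),
      IsMolecule P U₁ → IsMolecule P U₂ →
      U₁ ∩ U₂ = P.bd k true U₁ → U₁ ∩ U₂ = P.bd k false U₂ →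
      U₁ ≠ U₁ ∪ U₂ → U₂ ≠ U₁ ∪ U₂ →
      IsMolecule P (U₁ ∪ U₂)

/-- `∂^α x`: the boundary of the closure of a single element. -/
def OGP.bdx (P : OGP) (α : Bool) (x : P.carrier) : Set P.carrier :=
  P.bd (P.dim x - 1) α (P.cl {x})

/-- A directed complex: every `∂^α x` is a molecule, and globularity holds. -/
def IsDirectedComplex (P : OGP) : Prop :=
  ∀ (x : P.carrier) (α : Bool),
    IsMolecule P (P.bdx α x) ∧
    (1 < P.dim x → ∀ β : Bool,
      P.bd (P.dim x - 2) α (P.bdx β x) = P.bd (P.dim x - 2) α (P.cl {x}))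

/-- An `n`-molecule `U` has spherical boundary iff for all `k < n`,
`∂ₖ^+ U ∩ ∂ₖ^- U = ∂ₖ₋₁ U` (for `k = 0` the right-hand side is empty). -/
def HasSphericalBoundary (P : OGP) (n : ℕ) (U : Set P.carrier) : Prop :=
  (∀ k : ℕ, 0 < k → k < n →
      P.bd k true U ∩ P.bd k false U = P.bd (k - 1) true U ∪ P.bd (k - 1) false U) ∧
  (0 < n → P.bd 0 true U ∩ P.bd 0 false U = ∅)

/-- A regular directed complex: a directed complex all of whose atoms have
spherical boundary. -/
def IsRegularDC (P : OGP) : Prop :=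
  IsDirectedComplex P ∧ ∀ x : P.carrier, HasSphericalBoundary P (P.dim x) (P.cl {x})

/-- A `C`-functor between directed complexes: a function on closed subsets
preserving unions and binary intersections, commuting with boundaries of
atoms, and sending atoms to `C`-molecules. -/
structure CFun (P Q : OGP) (C : Set Q.carrier → Prop) where
  toFun : Set P.carrier → Set Q.carrier
  map_unions : ∀ S : Set (Set P.carrier), (∀ U ∈ S, P.IsClosed U) →
    toFun (⋃₀ S) = ⋃₀ (toFun '' S)
  map_inter : ∀ U V : Set P.carrier, P.IsClosed U → P.IsClosed V →
    toFun (U ∩ V) = toFun U ∩ toFun V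
  map_bd : ∀ (x : P.carrier) (n : ℕ) (α : Bool),
    Q.bd n α (toFun (P.cl {x})) = toFun (P.bd n α (P.cl {x}))
  atom_mol : ∀ x : P.carrier,
    IsMolecule Q (toFun (P.cl {x})) ∧ C (toFun (P.cl {x}))


/-! ### Auxiliary lemmas -/

namespace OGP

variable {P : OGP}

lemma subset_cl (U : Set P.carrier) : U ⊆ P.cl U := fun x hx => ⟨x, hx, le_rfl⟩

lemma isClosed_cl (U : Set P.carrier) : P.IsClosed (P.cl U) := by
  rintro x ⟨y, ⟨z, hz, hyz⟩, hxy⟩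
  exact ⟨z, hz, hxy.trans hyz⟩

lemma isClosed_clx (x : P.carrier) : P.IsClosed (P.cl {x}) := P.isClosed_cl _

lemma mem_clx {x z : P.carrier} : z ∈ P.cl {x} ↔ z ≤ x := by
  constructor
  · rintro ⟨y, rfl, h⟩; exact h
  · intro h; exact ⟨x, rfl, h⟩

lemma cl_singleton_subset {U : Set P.carrier} (hU : P.IsClosed U) {x : P.carrier}
    (hx : x ∈ U) : P.cl {x} ⊆ U := by
  intro z hz
  exact hU ⟨x, hx, OGP.mem_clx.1 hz⟩

lemma dim_lt_dim : ∀ y x : P.carrier, x < y → P.dim x < P.dim y := by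
  have wf : WellFoundedLT P.carrier := Finite.to_wellFoundedLT
  intro y
  induction y using WellFoundedLT.induction with
  | _ y ih =>
    intro x hxy
    obtain ⟨z, ⟨hxz, hzy⟩, hmax⟩ :=
      Set.Finite.exists_maximalFor id {z | x ≤ z ∧ z < y} (Set.toFinite _) ⟨x, le_rfl, hxy⟩
    have hcov : z ⋖ y := by
      refine ⟨hzy, fun w hzw hwy => ?_⟩
      exact absurd (hmax (j := w) ⟨hxz.trans hzw.le, hwy⟩ hzw.le) (not_le_of_gt hzw)
    have hgr := P.graded z y hcov
    rcases hxz.lt_or_eq with hlt | rfl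
    · have := ih z hzy x hlt
      omega
    · omega

lemma dim_le_dim {x y : P.carrier} (h : x ≤ y) : P.dim x ≤ P.dim y := by
  rcases h.lt_or_eq with hlt | rfl
  · exact (P.dim_lt_dim y x hlt).le
  · exact le_rfl

lemma bddAbove_dim_image (U : Set P.carrier) : BddAbove (P.dim '' U) :=
  ((Set.toFinite U).image P.dim).bddAbove

lemma le_sdim {U : Set P.carrier} {x : P.carrier} (hx : x ∈ U) : P.dim x ≤ P.sdim U :=
  le_csSup (P.bddAbove_dim_image U) ⟨x, hx, rfl⟩

lemma sdim_le {U : Set P.carrier} {n : ℕ} (h : ∀ x ∈ U, P.dim x ≤ n) : P.sdim U ≤ n := by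
  rcases U.eq_empty_or_nonempty with rfl | hne
  · simp [OGP.sdim]
  · exact csSup_le (hne.image _) (by rintro m ⟨x, hx, rfl⟩; exact h x hx)

lemma sdim_mono {U V : Set P.carrier} (h : U ⊆ V) : P.sdim U ≤ P.sdim V :=
  P.sdim_le fun x hx => P.le_sdim (h hx)

lemma exists_dim_eq_sdim {U : Set P.carrier} (h : U.Nonempty) :
    ∃ x ∈ U, P.dim x = P.sdim U := by
  have := Nat.sSup_mem (h.image P.dim) (P.bddAbove_dim_image U)
  rcases this with ⟨x, hx, hdx⟩
  exact ⟨x, hx, hdx⟩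

lemma dim_le_of_mem_bd {U : Set P.carrier} {n : ℕ} {α : Bool} {x : P.carrier}
    (hx : x ∈ P.bd n α U) : P.dim x ≤ n := by
  rcases hx with ⟨y, ⟨_, hyd, _⟩, hxy⟩ | ⟨hxU, h2⟩
  · exact (P.dim_le_dim hxy).trans hyd.le
  · exact h2 x hxU le_rfl

lemma bd_eq_self {U : Set P.carrier} (hU : P.IsClosed U) {n : ℕ}
    (h : ∀ x ∈ U, P.dim x ≤ n) (α : Bool) : P.bd n α U = U := by
  apply Set.Subset.antisymm
  · rintro x (⟨y, ⟨hyU, _, _⟩, hxy⟩ | ⟨hxU, _⟩)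
    · exact hU ⟨y, hyU, hxy⟩
    · exact hxU
  · intro x hx
    exact Or.inr ⟨hx, fun y hy _ => h y hy⟩

lemma isClosed_bd_atom {x : P.carrier} {n : ℕ} (hn : n < P.dim x) (α : Bool) :
    P.IsClosed (P.bd n α (P.cl {x})) := by
  have hsub : ∀ w ∈ P.bd n α (P.cl {x}), w ∈ P.cl (P.sb n α (P.cl {x})) := by
    rintro w (hw | ⟨hwU, h2⟩)
    · exact hw
    · exact absurd (h2 x (OGP.mem_clx.2 le_rfl) (OGP.mem_clx.1 hwU)) (not_le.2 hn)
  rintro z ⟨w, hw, hzw⟩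
  obtain ⟨s, hs, hws⟩ := hsub w hw
  exact Or.inl ⟨s, hs, hzw.trans hws⟩

end OGP

lemma IsMolecule.isClosed {P : OGP} {U : Set P.carrier} (h : IsMolecule P U) :
    P.IsClosed U := by
  induction h with
  | atom U hc _ => exact hc
  | paste U₁ U₂ k _ _ _ _ _ _ ih₁ ih₂ =>
    rintro x ⟨y, hy, hxy⟩
    rcases hy with hy | hy
    · exact Or.inl (ih₁ ⟨y, hy, hxy⟩)
    · exact Or.inr (ih₂ ⟨y, hy, hxy⟩)

lemma IsMolecule.nonempty {P : OGP} {U : Set P.carrier} (h : IsMolecule P U) :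
    U.Nonempty := by
  induction h with
  | atom U _ hx => obtain ⟨x, hx, _⟩ := hx; exact ⟨x, hx⟩
  | paste U₁ U₂ k _ _ _ _ _ _ ih₁ _ => exact ih₁.mono Set.subset_union_left

lemma CFun.map_empty {P Q : OGP} {C : Set Q.carrier → Prop} (f : CFun P Q C) :
    f.toFun ∅ = ∅ := by
  have h := f.map_unions ∅ (by simp)
  simpa using h

lemma CFun.map_union {P Q : OGP} {C : Set Q.carrier → Prop} (f : CFun P Q C)
    {U V : Set P.carrier} (hU : P.IsClosed U) (hV : P.IsClosed V) :
    f.toFun (U ∪ V) = f.toFun U ∪ f.toFun V := by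
  have h := f.map_unions {U, V} (by
    intro W hW
    simp only [Set.mem_insert_iff, Set.mem_singleton_iff] at hW
    rcases hW with rfl | rfl <;> assumption)
  simpa [Set.sUnion_pair, Set.image_pair] using h

/-- A `C`-functor preserves the dimension of atoms. -/
lemma CFun.sdim_atom {P Q : OGP} (hP : IsRegularDC P) {C : Set Q.carrier → Prop}
    (f : CFun P Q C) (x : P.carrier) :
    Q.sdim (f.toFun (P.cl {x})) = P.dim x := by
  obtain ⟨hmol, -⟩ := f.atom_mol x
  have hVc : Q.IsClosed (f.toFun (P.cl {x})) := hmol.isClosed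
  have hVne : (f.toFun (P.cl {x})).Nonempty := hmol.nonempty
  have hclx : ∀ z ∈ P.cl {x}, P.dim z ≤ P.dim x := fun z hz =>
    P.dim_le_dim (OGP.mem_clx.1 hz)
  -- upper bound
  have hub : Q.sdim (f.toFun (P.cl {x})) ≤ P.dim x := by
    have hbd : Q.bd (P.dim x) true (f.toFun (P.cl {x})) = f.toFun (P.cl {x}) := by
      rw [f.map_bd, P.bd_eq_self (P.isClosed_clx x) hclx]
    refine Q.sdim_le fun z hz => ?_
    rw [← hbd] at hz
    exact Q.dim_le_of_mem_bd hz
  -- lower bound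
  have hlb : ¬ Q.sdim (f.toFun (P.cl {x})) < P.dim x := by
    intro hm
    have hVm : ∀ α : Bool, f.toFun (P.bd (Q.sdim (f.toFun (P.cl {x}))) α (P.cl {x}))
        = f.toFun (P.cl {x}) := fun α => by
      rw [← f.map_bd, Q.bd_eq_self hVc (fun z hz => Q.le_sdim hz)]
    have hinter : f.toFun (P.bd (Q.sdim (f.toFun (P.cl {x}))) true (P.cl {x})
        ∩ P.bd (Q.sdim (f.toFun (P.cl {x}))) false (P.cl {x})) = f.toFun (P.cl {x}) := by
      rw [f.map_inter _ _ (P.isClosed_bd_atom hm true) (P.isClosed_bd_atom hm false),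
        hVm, hVm, Set.inter_self]
    obtain ⟨sph1, sph2⟩ := hP.2 x
    rcases Nat.eq_zero_or_pos (Q.sdim (f.toFun (P.cl {x}))) with hm0 | hmpos
    · rw [hm0] at hinter
      rw [sph2 (hm0 ▸ hm), f.map_empty] at hinter
      exact hVne.ne_empty hinter.symm
    · have hV' : f.toFun (P.cl {x}) =
          Q.bd (Q.sdim (f.toFun (P.cl {x})) - 1) true (f.toFun (P.cl {x}))
          ∪ Q.bd (Q.sdim (f.toFun (P.cl {x})) - 1) false (f.toFun (P.cl {x})) := by
        conv_lhs => rw [← hinter, sph1 _ hmpos hm,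
          f.map_union (P.isClosed_bd_atom (lt_of_le_of_lt (Nat.sub_le _ 1) hm) true)
            (P.isClosed_bd_atom (lt_of_le_of_lt (Nat.sub_le _ 1) hm) false)]
        rw [f.map_bd, f.map_bd]
      obtain ⟨v, hv, hdv⟩ := Q.exists_dim_eq_sdim hVne
      rw [hV'] at hv
      have hle : Q.dim v ≤ Q.sdim (f.toFun (P.cl {x})) - 1 := by
        rcases hv with hv | hv <;> exact Q.dim_le_of_mem_bd hv
      omega
  exact le_antisymm hub (not_lt.1 hlb)

/-- a `C`-functor preserves the dimension of closed subsets,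
and consequently is injective on closed subsets. -/
theorem stmt16 (P Q : OGP) (hP : IsRegularDC P) (hQ : IsRegularDC Q)
    (C : Set Q.carrier → Prop) (f : CFun P Q C) :
    (∀ U : Set P.carrier, P.IsClosed U → P.sdim U = Q.sdim (f.toFun U)) ∧
    (∀ U V : Set P.carrier, P.IsClosed U → P.IsClosed V →
      f.toFun U = f.toFun V → U = V) := by
  have hdim : ∀ U : Set P.carrier, P.IsClosed U → P.sdim U = Q.sdim (f.toFun U) := by
    intro U hU
    have hcup : ⋃₀ ((fun x => P.cl {x}) '' U) = U := by
      apply Set.Subset.antisymm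
      · rintro z ⟨W, ⟨y, hy, rfl⟩, hzW⟩
        exact P.cl_singleton_subset hU hy hzW
      · intro z hz
        exact ⟨P.cl {z}, ⟨z, hz, rfl⟩, OGP.mem_clx.2 le_rfl⟩
    have hdecomp : f.toFun U = ⋃₀ (f.toFun '' ((fun x => P.cl {x}) '' U)) := by
      rw [← f.map_unions _ (by rintro W ⟨y, hy, rfl⟩; exact P.isClosed_clx y), hcup]
    have hsub : ∀ x ∈ U, f.toFun (P.cl {x}) ⊆ f.toFun U := by
      intro x hx
      rw [hdecomp]
      exact Set.subset_sUnion_of_mem ⟨P.cl {x}, ⟨x, hx, rfl⟩, rfl⟩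
    apply le_antisymm
    · refine P.sdim_le fun x hx => ?_
      calc P.dim x = Q.sdim (f.toFun (P.cl {x})) := (f.sdim_atom hP x).symm
        _ ≤ Q.sdim (f.toFun U) := Q.sdim_mono (hsub x hx)
    · refine Q.sdim_le fun z hz => ?_
      rw [hdecomp] at hz
      obtain ⟨W, ⟨W', ⟨y, hy, rfl⟩, rfl⟩, hzW⟩ := hz
      calc Q.dim z ≤ Q.sdim (f.toFun (P.cl {y})) := Q.le_sdim hzW
        _ = P.dim y := f.sdim_atom hP y
        _ ≤ P.sdim U := P.le_sdim hy
  refine ⟨hdim, ?_⟩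
  have key : ∀ U V : Set P.carrier, P.IsClosed U → P.IsClosed V →
      f.toFun U = f.toFun V → U ⊆ V := by
    intro U V hU hV hfUV x hx
    by_contra hxV
    have h1 : f.toFun (P.cl {x}) ⊆ f.toFun U := by
      have h := f.map_union (P.isClosed_clx x) hU
      rw [Set.union_eq_self_of_subset_left (P.cl_singleton_subset hU hx)] at h
      intro z hz
      rw [h]
      exact Or.inl hz
    have hclosedint : P.IsClosed (P.cl {x} ∩ V) := by
      rintro z ⟨y, hy, hzy⟩
      exact ⟨P.isClosed_clx x ⟨y, hy.1, hzy⟩, hV ⟨y, hy.2, hzy⟩⟩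
    have hint : f.toFun (P.cl {x} ∩ V) = f.toFun (P.cl {x}) := by
      rw [f.map_inter _ _ (P.isClosed_clx x) hV, ← hfUV]
      exact Set.inter_eq_left.2 h1
    have hdims : P.sdim (P.cl {x} ∩ V) = P.dim x := by
      rw [hdim _ hclosedint, hint, f.sdim_atom hP x]
    have hne : (P.cl {x} ∩ V).Nonempty := by
      by_contra h
      rw [Set.not_nonempty_iff_eq_empty] at h
      rw [h, f.map_empty] at hint
      exact (f.atom_mol x).1.nonempty.ne_empty hint.symm
    obtain ⟨y, hy, hdy⟩ := P.exists_dim_eq_sdim hne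
    rw [hdims] at hdy
    have hyx : y ≤ x := OGP.mem_clx.1 hy.1
    rcases hyx.lt_or_eq with hlt | rfl
    · exact absurd hdy (ne_of_lt (P.dim_lt_dim x y hlt))
    · exact hxV hy.2
  intro U V hU hV hfUV
  exact Set.Subset.antisymm (key U V hU hV hfUV) (key V U hV hU hfUV.symm)
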